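/- Let B = (f_1,…,f_n) be a basis of ℝ^n and v ∈ (ℝ*)^n with |∏_i v_i| = 1 and v_n > 0. Define χ_B(x,y) = lim_{t→0^+} χ_B^0(x + t e_n, y), where χ_B^0(x,y) = ε(B,y)·𝟙_{C_B^0(y)}(x), with C_B^0(y) the open cone generated by the vectors ε(Tr(f_i y)) f_i and ε(B,y) = ε(det B) ∏_i ε(Tr(f_i y)). Then χ_{vB}(x,y) = N(v)·χ_B(v^{−1}x, vy), where vB = (v f_1,…,v f_n) (componentwise products), N(v) = ∏_i v_i, v^{−1}x = (x_1/v_1,…,x_n/v_n), and vy = (v_1 y_1,…,v_n y_n). -/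

import Mathlib

open scoped BigOperators Classical

/-- The function `χ_B^0(x,y) = ε(B,y) 𝟙_{C_B^0(y)}(x)`, where `C_B^0(y)` is the open cone
generated by the vectors `ε(Tr(f_i y)) f_i` and
`ε(B,y) = ε(det B) ∏_i ε(Tr(f_i y))`. -/
noncomputable def chiZero (n : ℕ) (f : Fin n → Fin n → ℝ) (x y : Fin n → ℝ) : ℝ :=
  if ∃ c : Fin n → ℝ, (∀ i, 0 < c i) ∧
      x = ∑ i, c i • (Real.sign (∑ k, f i k * y k) • f i)
  then Real.sign (Matrix.of f).det * ∏ i, Real.sign (∑ k, f i k * y k)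
  else 0

/-- `χ_B(x,y) = lim_{t→0⁺} χ_B^0(x + t e_n, y)`. -/
noncomputable def chiLim (m : ℕ) (f : Fin (m + 1) → Fin (m + 1) → ℝ)
    (x y : Fin (m + 1) → ℝ) : ℝ :=
  Filter.limUnder (nhdsWithin (0 : ℝ) (Set.Ioi 0))
    (fun t : ℝ => chiZero (m + 1) f (x + t • (Pi.single (Fin.last m) (1 : ℝ) : Fin (m + 1) → ℝ)) y)

/- ### Auxiliary lemmas -/

lemma real_sign_mul (a b : ℝ) : Real.sign (a * b) = Real.sign a * Real.sign b := by
  rcases lt_trichotomy a 0 with ha | ha | ha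
  · rcases lt_trichotomy b 0 with hb | hb | hb
    · rw [Real.sign_of_pos (mul_pos_of_neg_of_neg ha hb), Real.sign_of_neg ha,
        Real.sign_of_neg hb]; norm_num
    · simp [hb]
    · rw [Real.sign_of_neg (mul_neg_of_neg_of_pos ha hb), Real.sign_of_neg ha,
        Real.sign_of_pos hb]; norm_num
  · simp [ha]
  · rcases lt_trichotomy b 0 with hb | hb | hb
    · rw [Real.sign_of_neg (mul_neg_of_pos_of_neg ha hb), Real.sign_of_pos ha,
        Real.sign_of_neg hb]; norm_num
    · simp [hb]
    · rw [Real.sign_of_pos (mul_pos ha hb), Real.sign_of_pos ha, Real.sign_of_pos hb]; norm_num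

lemma combo_pos {θ a b : ℝ} (h0 : 0 ≤ θ) (h1 : θ ≤ 1) (ha : 0 < a) (hb : 0 < b) :
    0 < (1 - θ) * a + θ * b := by
  rcases lt_or_eq_of_le h1 with h | h
  · have h2 : 0 < (1 - θ) * a := mul_pos (by linarith) ha
    nlinarith [mul_nonneg h0 hb.le]
  · subst h; simpa using hb

/-- The set of `t` for which `x + t • e` lies in the open cone generated by the `g i`
is order-connected. -/
lemma icc_subset_cone {n : ℕ} (g : Fin n → Fin n → ℝ) (x e : Fin n → ℝ) {t₁ t₂ : ℝ}
    (h₁ : t₁ ∈ {t : ℝ | ∃ c : Fin n → ℝ, (∀ i, 0 < c i) ∧ x + t • e = ∑ i, c i • g i})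
    (h₂ : t₂ ∈ {t : ℝ | ∃ c : Fin n → ℝ, (∀ i, 0 < c i) ∧ x + t • e = ∑ i, c i • g i}) :
    Set.Icc t₁ t₂ ⊆ {t : ℝ | ∃ c : Fin n → ℝ, (∀ i, 0 < c i) ∧ x + t • e = ∑ i, c i • g i} := by
  rintro t ⟨ht₁, ht₂⟩
  rcases le_or_gt t₂ t₁ with hle | hlt
  · have : t = t₁ := le_antisymm (ht₂.trans hle) ht₁
    subst this; exact h₁
  · obtain ⟨c₁, hc₁, he₁⟩ := h₁
    obtain ⟨c₂, hc₂, he₂⟩ := h₂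
    set θ : ℝ := (t - t₁) / (t₂ - t₁) with hθdef
    have hθ0 : 0 ≤ θ := div_nonneg (by linarith) (by linarith)
    have hθ1 : θ ≤ 1 := (div_le_one (by linarith)).mpr (by linarith)
    have ht : t = (1 - θ) * t₁ + θ * t₂ := by
      have hne : t₂ - t₁ ≠ 0 := ne_of_gt (by linarith)
      rw [hθdef]
      field_simp
      ring
    refine ⟨fun i => (1 - θ) * c₁ i + θ * c₂ i,
      fun i => combo_pos hθ0 hθ1 (hc₁ i) (hc₂ i), ?_⟩
    have key : x + t • e = (1 - θ) • (x + t₁ • e) + θ • (x + t₂ • e) := by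
      funext k
      simp only [Pi.add_apply, Pi.smul_apply, smul_eq_mul]
      rw [ht]; ring
    rw [key, he₁, he₂, Finset.smul_sum, Finset.smul_sum, ← Finset.sum_add_distrib]
    exact Finset.sum_congr rfl fun i _ => by rw [smul_smul, smul_smul, add_smul]

/-- Dichotomy for an order-connected set of reals near `0⁺`. -/
lemma eventually_dichotomy {T : Set ℝ}
    (hT : ∀ a ∈ T, ∀ b ∈ T, Set.Icc a b ⊆ T) :
    (∀ᶠ t in nhdsWithin (0 : ℝ) (Set.Ioi 0), t ∈ T) ∨
      (∀ᶠ t in nhdsWithin (0 : ℝ) (Set.Ioi 0), t ∉ T) := by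
  by_cases h : ∃ᶠ t in nhdsWithin (0 : ℝ) (Set.Ioi 0), t ∈ T
  · left
    obtain ⟨t₀, ht₀T, ht₀pos⟩ := (h.and_eventually self_mem_nhdsWithin).exists
    filter_upwards [Ioo_mem_nhdsGT_of_mem (Set.left_mem_Ico.mpr ht₀pos)] with t ht
    obtain ⟨t₁, ht₁T, ht₁⟩ :=
      (h.and_eventually (Ioo_mem_nhdsGT_of_mem (Set.left_mem_Ico.mpr ht.1))).exists
    exact hT t₁ ht₁T t₀ ht₀T ⟨ht₁.2.le, ht.2.le⟩
  · right; exact Filter.not_frequently.mp h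

/-- The function `t ↦ χ⁰(x + t eₙ, y)` is eventually constant as `t → 0⁺`. -/
lemma exists_eventually_const (m : ℕ) (f : Fin (m + 1) → Fin (m + 1) → ℝ)
    (x y : Fin (m + 1) → ℝ) :
    ∃ c : ℝ,
      (fun t : ℝ => chiZero (m + 1) f
          (x + t • (Pi.single (Fin.last m) (1 : ℝ) : Fin (m + 1) → ℝ)) y)
        =ᶠ[nhdsWithin (0 : ℝ) (Set.Ioi 0)] fun _ => c := by
  set e : Fin (m + 1) → ℝ := Pi.single (Fin.last m) (1 : ℝ)
  set g : Fin (m + 1) → Fin (m + 1) → ℝ :=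
    fun i => Real.sign (∑ k, f i k * y k) • f i with hg
  set T : Set ℝ :=
    {t : ℝ | ∃ c : Fin (m + 1) → ℝ, (∀ i, 0 < c i) ∧ x + t • e = ∑ i, c i • g i} with hTdef
  have hT : ∀ a ∈ T, ∀ b ∈ T, Set.Icc a b ⊆ T := fun a ha b hb => icc_subset_cone g x e ha hb
  rcases eventually_dichotomy hT with hmem | hnot
  · refine ⟨Real.sign (Matrix.of f).det * ∏ i, Real.sign (∑ k, f i k * y k), ?_⟩
    filter_upwards [hmem] with t ht
    exact if_pos ht
  · refine ⟨0, ?_⟩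
    filter_upwards [hnot] with t ht
    exact if_neg ht

/-- Pointwise scaling identity for `χ⁰`. -/
lemma chiZero_scale (m : ℕ) (f : Fin (m + 1) → Fin (m + 1) → ℝ)
    (v : Fin (m + 1) → ℝ) (hv : ∀ i, v i ≠ 0) (hN : |∏ i, v i| = 1)
    (x y : Fin (m + 1) → ℝ) (t : ℝ) :
    chiZero (m + 1) (fun i k => v k * f i k)
        (x + t • (Pi.single (Fin.last m) (1 : ℝ) : Fin (m + 1) → ℝ)) y
      = (∏ i, v i) * chiZero (m + 1) f
          ((fun k => x k / v k) +
            (t / v (Fin.last m)) • (Pi.single (Fin.last m) (1 : ℝ) : Fin (m + 1) → ℝ))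
          (fun k => v k * y k) := by
  set e : Fin (m + 1) → ℝ := Pi.single (Fin.last m) (1 : ℝ) with he
  have hsum : ∀ i, (∑ k, (v k * f i k) * y k) = ∑ k, f i k * (v k * y k) :=
    fun i => Finset.sum_congr rfl fun k _ => by ring
  set s : Fin (m + 1) → ℝ := fun i => Real.sign (∑ k, f i k * (v k * y k)) with hs
  have hek : ∀ k, (t / v (Fin.last m)) * e k * v k = t * e k := by
    intro k
    rcases eq_or_ne k (Fin.last m) with rfl | hk
    · simp [he, Pi.single_eq_same, div_mul_cancel₀ _ (hv (Fin.last m))]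
    · simp [he, Pi.single_eq_of_ne hk]
  have hcond :
      (∃ c : Fin (m + 1) → ℝ, (∀ i, 0 < c i) ∧
          x + t • e = ∑ i, c i • (Real.sign (∑ k, (v k * f i k) * y k) •
            fun k => v k * f i k)) ↔
      (∃ c : Fin (m + 1) → ℝ, (∀ i, 0 < c i) ∧
          ((fun k => x k / v k) + (t / v (Fin.last m)) • e)
            = ∑ i, c i • (s i • f i)) := by
    have hrw : ∀ (c : Fin (m + 1) → ℝ),
        ((x + t • e = ∑ i, c i • (Real.sign (∑ k, (v k * f i k) * y k) •
            fun k => v k * f i k)) ↔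
          ((fun k => x k / v k) + (t / v (Fin.last m)) • e = ∑ i, c i • (s i • f i))) := by
      intro c
      rw [funext_iff, funext_iff]
      refine forall_congr' fun k => ?_
      simp only [Pi.add_apply, Pi.smul_apply, Finset.sum_apply, smul_eq_mul, hsum, ← hs]
      have hfac : (∑ i, c i * (s i * (v k * f i k)))
          = v k * ∑ i, c i * (s i * f i k) := by
        rw [Finset.mul_sum]; exact Finset.sum_congr rfl fun i _ => by ring
      rw [hfac]
      constructor
      · intro h
        have hA : (∑ i, c i * (s i * f i k)) = (x k + t * e k) / v k := by
          rw [eq_div_iff (hv k), mul_comm]; exact h.symm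
        rw [hA, add_div]
        congr 1
        rw [eq_div_iff (hv k)]
        exact hek k
      · intro h
        rw [← h, mul_add, mul_comm (v k) (x k / v k), div_mul_cancel₀ _ (hv k)]
        linear_combination -hek k
    exact exists_congr fun c => and_congr_right fun _ => hrw c
  have hdet : (Matrix.of fun i k => v k * f i k).det = (Matrix.of f).det * ∏ i, v i := by
    have : (Matrix.of fun i k => v k * f i k) = Matrix.of f * Matrix.diagonal v := by
      ext i k
      simp [Matrix.mul_diagonal, mul_comm]
    rw [this, Matrix.det_mul, Matrix.det_diagonal]
  have hsgnN : Real.sign (∏ i, v i) = ∏ i, v i := by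
    rcases (abs_eq (by norm_num : (0:ℝ) ≤ 1)).mp hN with h | h <;>
      rw [h] <;> simp [Real.sign_of_pos, Real.sign_of_neg, show (-1:ℝ) < 0 by norm_num]
  simp only [chiZero]
  rw [if_congr hcond rfl rfl]
  split_ifs with h
  · have hsigns : (∏ i, Real.sign (∑ k, (v k * f i k) * y k))
        = ∏ i, Real.sign (∑ k, f i k * (v k * y k)) :=
      Finset.prod_congr rfl fun i _ => by rw [hsum]
    rw [hdet, real_sign_mul, hsigns, hsgnN]
    ring
  · ring

theorem chiLim_smul_eq
    (m : ℕ) (f : Fin (m + 1) → Fin (m + 1) → ℝ)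
    (hli : LinearIndependent ℝ f)
    (v : Fin (m + 1) → ℝ) (hv : ∀ i, v i ≠ 0)
    (hN : |∏ i, v i| = 1) (hvn : 0 < v (Fin.last m))
    (x y : Fin (m + 1) → ℝ)
    (hy : ∀ i, ∑ k, (v k * f i k) * y k ≠ 0) :
    chiLim m (fun i k => v k * f i k) x y
      = (∏ i, v i) * chiLim m f (fun k => x k / v k) (fun k => v k * y k) := by
  obtain ⟨c, hc⟩ := exists_eventually_const m f (fun k => x k / v k) (fun k => v k * y k)
  have hdiv : Filter.Tendsto (fun t : ℝ => t / v (Fin.last m))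
      (nhdsWithin (0 : ℝ) (Set.Ioi 0)) (nhdsWithin (0 : ℝ) (Set.Ioi 0)) := by
    apply tendsto_nhdsWithin_of_tendsto_nhds_of_eventually_within
    · have : Filter.Tendsto (fun t : ℝ => t / v (Fin.last m)) (nhds 0) (nhds (0 / v (Fin.last m))) :=
        (continuous_id.div_const _).tendsto 0
      simpa using this.mono_left nhdsWithin_le_nhds
    · filter_upwards [self_mem_nhdsWithin] with t ht
      exact div_pos ht hvn
  have h2 : chiLim m f (fun k => x k / v k) (fun k => v k * y k) = c := by
    apply Filter.Tendsto.limUnder_eq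
    exact Filter.Tendsto.congr' hc.symm tendsto_const_nhds
  have h1 : chiLim m (fun i k => v k * f i k) x y = (∏ i, v i) * c := by
    apply Filter.Tendsto.limUnder_eq
    have heq : (fun t : ℝ => chiZero (m + 1) (fun i k => v k * f i k)
        (x + t • (Pi.single (Fin.last m) (1 : ℝ) : Fin (m + 1) → ℝ)) y)
        =ᶠ[nhdsWithin (0 : ℝ) (Set.Ioi 0)] fun _ => (∏ i, v i) * c := by
      filter_upwards [hdiv.eventually hc] with t ht
      rw [chiZero_scale m f v hv hN x y t, ht]
    exact Filter.Tendsto.congr' heq.symm tendsto_const_nhds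
  rw [h1, h2]
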